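/- Let λ, h, f : [0, T) → ℝ solve the cylinder soliton ODE system (λ > 0, λ' = −1 + λh², h' = h/λ − (3/2)h³, f' = (1/2)h²f) with λ(0) = 1 and 0 < h(0)² < 1/2. Then T ≤ 2. -/

import Mathlib

open Set intervalIntegral

/-- If the cylinder soliton ODE system has a solution on `[0, T)` with `λ(0) = 1`
and `0 < h(0)² < 1/2`, then `T ≤ 2`. -/
theorem stmt_15 (T : ℝ) (lam h f : ℝ → ℝ)
    (hpos : ∀ t ∈ Set.Ico (0 : ℝ) T, 0 < lam t)
    (hlam : ∀ t ∈ Set.Ico (0 : ℝ) T,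
      HasDerivWithinAt lam (-1 + lam t * (h t) ^ 2) (Set.Ico 0 T) t)
    (hh : ∀ t ∈ Set.Ico (0 : ℝ) T,
      HasDerivWithinAt h (h t / lam t - (3 / 2) * (h t) ^ 3) (Set.Ico 0 T) t)
    (hf : ∀ t ∈ Set.Ico (0 : ℝ) T,
      HasDerivWithinAt f ((1 / 2) * (h t) ^ 2 * f t) (Set.Ico 0 T) t)
    (hlam0 : lam 0 = 1) (hh0 : 0 < (h 0) ^ 2) (hh0' : (h 0) ^ 2 < 1 / 2) :
    T ≤ 2 := by
  by_contra hT
  push_neg at hT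
  -- every point of [0,2] is in [0,T)
  have hmem : ∀ x ∈ Set.Icc (0:ℝ) 2, x ∈ Set.Ico (0:ℝ) T :=
    fun x hx => ⟨hx.1, lt_of_le_of_lt hx.2 hT⟩
  -- for x ∈ [0,2), the set [0,T) is a neighborhood of x within Ici x
  have hnhds : ∀ x ∈ Set.Ico (0:ℝ) 2, Set.Ico (0:ℝ) T ∈ nhdsWithin x (Set.Ici x) := by
    intro x hx
    refine mem_nhdsWithin.2 ⟨Set.Iio T, isOpen_Iio, lt_of_lt_of_le (lt_of_lt_of_le hx.2 hT.le) le_rfl, ?_⟩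
    rintro y ⟨hy1, hy2⟩
    exact ⟨le_trans hx.1 hy2, hy1⟩
  -- similarly [0,2] is a neighborhood of x within Ici x, for x ∈ [0,2)
  have hnhds2 : ∀ x ∈ Set.Ico (0:ℝ) 2, Set.Icc (0:ℝ) 2 ∈ nhdsWithin x (Set.Ici x) := by
    intro x hx
    refine mem_nhdsWithin.2 ⟨Set.Iio 2, isOpen_Iio, hx.2, ?_⟩
    rintro y ⟨hy1, hy2⟩
    exact ⟨le_trans hx.1 hy2, hy1.le⟩
  -- right derivatives on [0,2)
  have hlamI : ∀ x ∈ Set.Ico (0:ℝ) 2,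
      HasDerivWithinAt lam (-1 + lam x * (h x) ^ 2) (Set.Ici x) x := fun x hx =>
    (hlam x (hmem x ⟨hx.1, hx.2.le⟩)).mono_of_mem_nhdsWithin (hnhds x hx)
  have hhI : ∀ x ∈ Set.Ico (0:ℝ) 2,
      HasDerivWithinAt h (h x / lam x - (3 / 2) * (h x) ^ 3) (Set.Ici x) x := fun x hx =>
    (hh x (hmem x ⟨hx.1, hx.2.le⟩)).mono_of_mem_nhdsWithin (hnhds x hx)
  -- continuity on [0,2]
  have hlamC : ContinuousOn lam (Set.Icc (0:ℝ) 2) := fun x hx =>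
    ((hlam x (hmem x hx)).continuousWithinAt).mono (fun y hy => hmem y hy)
  have hhC : ContinuousOn h (Set.Icc (0:ℝ) 2) := fun x hx =>
    ((hh x (hmem x hx)).continuousWithinAt).mono (fun y hy => hmem y hy)
  have hsqC : ContinuousOn (fun τ => 2 * h τ ^ 2) (Set.Icc (0:ℝ) 2) :=
    (continuousOn_const.mul (hhC.pow 2))
  -- the primitive of 2 h²
  set G : ℝ → ℝ := fun t => ∫ τ in (0:ℝ)..t, 2 * h τ ^ 2 with hGdef
  have hGI : ∀ x ∈ Set.Ico (0:ℝ) 2, HasDerivWithinAt G (2 * h x ^ 2) (Set.Ici x) x := by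
    intro x hx
    have hxIcc : x ∈ Set.Icc (0:ℝ) 2 := ⟨hx.1, hx.2.le⟩
    have hint : IntervalIntegrable (fun τ => 2 * h τ ^ 2) MeasureTheory.volume 0 x := by
      apply ContinuousOn.intervalIntegrable
      apply hsqC.mono
      rw [Set.uIcc_of_le hx.1]
      exact Set.Icc_subset_Icc le_rfl hx.2.le
    have hmeas : StronglyMeasurableAtFilter (fun τ => 2 * h τ ^ 2)
        (nhdsWithin x (Set.Ici x)) MeasureTheory.volume := by
      refine (hsqC.stronglyMeasurableAtFilter_nhdsWithin measurableSet_Icc x).filter_mono ?_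
      exact nhdsWithin_le_of_mem (hnhds2 x hx)
    have hcw : ContinuousWithinAt (fun τ => 2 * h τ ^ 2) (Set.Ioi x) x :=
      ((hsqC x hxIcc).mono_of_mem_nhdsWithin (hnhds2 x hx)).mono Set.Ioi_subset_Ici_self
    exact intervalIntegral.integral_hasDerivWithinAt_right hint
      (hmeas.filter_mono (nhdsWithin_mono x Set.Ioi_subset_Ici_self)) hcw
  have hGC : ContinuousOn G (Set.Icc (0:ℝ) 2) := by
    have huI : Set.uIcc (0:ℝ) 2 = Set.Icc (0:ℝ) 2 := Set.uIcc_of_le (by norm_num)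
    have hint2 : MeasureTheory.IntegrableOn (fun τ => 2 * h τ ^ 2) (Set.uIcc (0:ℝ) 2)
        MeasureTheory.volume := by
      rw [huI]; exact hsqC.integrableOn_Icc
    have := intervalIntegral.continuousOn_primitive_interval hint2
    rw [huI] at this
    exact this
  -- the quantity w = 1/2 - λ h², and W = w * exp G
  set w : ℝ → ℝ := fun t => 1 / 2 - lam t * h t ^ 2 with hwdef
  set W : ℝ → ℝ := fun t => w t * Real.exp (G t) with hWdef
  have hWC : ContinuousOn W (Set.Icc (0:ℝ) 2) :=
    ((continuousOn_const.sub (hlamC.mul (hhC.pow 2))).mul (Real.continuous_exp.comp_continuousOn hGC))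
  have hWderiv : ∀ x ∈ Set.Ico (0:ℝ) 2, HasDerivWithinAt W 0 (Set.Ici x) x := by
    intro x hx
    have hlx : lam x ≠ 0 := (hpos x (hmem x ⟨hx.1, hx.2.le⟩)).ne'
    have hwd : HasDerivWithinAt w
        (-((-1 + lam x * h x ^ 2) * h x ^ 2 +
          lam x * (2 * h x ^ 1 * (h x / lam x - (3 / 2) * h x ^ 3)))) (Set.Ici x) x :=
      (((hlamI x hx).mul ((hhI x hx).pow 2))).const_sub (1/2)
    have hed : HasDerivWithinAt (fun t => Real.exp (G t))
        (Real.exp (G x) * (2 * h x ^ 2)) (Set.Ici x) x := (hGI x hx).exp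
    have := hwd.mul hed
    convert this using 1
    · rfl
    · rfl
    · rfl
    have hkey : (-((-1 + lam x * h x ^ 2) * h x ^ 2 +
        lam x * (2 * h x ^ 1 * (h x / lam x - (3 / 2) * h x ^ 3))))
        = -(2 * h x ^ 2) * w x := by
      rw [hwdef]; field_simp; ring
    rw [hkey]
    ring
  -- W is constant on [0,2]
  have hWconst : ∀ x ∈ Set.Icc (0:ℝ) 2, W x = W 0 :=
    constant_of_has_deriv_right_zero hWC hWderiv
  have hW0 : 0 < W 0 := by
    have : G 0 = 0 := intervalIntegral.integral_same
    simp only [hWdef, hwdef, this, Real.exp_zero, mul_one, hlam0, one_mul]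
    linarith
  -- hence λ h² < 1/2 on [0,2]
  have hwpos : ∀ x ∈ Set.Icc (0:ℝ) 2, lam x * h x ^ 2 < 1 / 2 := by
    intro x hx
    have h1 : 0 < W x := by rw [hWconst x hx]; exact hW0
    simp only [hWdef, hwdef] at h1
    have h2 := Real.exp_pos (G x)
    nlinarith [h1, h2]
  -- comparison: λ(t) ≤ 1 - t/2 on [0,2]
  have hB : ∀ x ∈ Set.Ico (0:ℝ) 2,
      HasDerivWithinAt (fun t : ℝ => 1 - t / 2) (-(1/2)) (Set.Ici x) x := by
    intro x _
    have : HasDerivAt (fun t : ℝ => 1 - t / 2) (-(1/2)) x := by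
      simpa using ((hasDerivAt_id x).div_const 2).const_sub 1
    exact this.hasDerivWithinAt
  have hcomp : lam 2 ≤ 1 - 2 / 2 := by
    refine image_le_of_deriv_right_le_deriv_boundary hlamC hlamI ?_
      ((continuousOn_const.sub (continuousOn_id.div_const 2))) hB ?_ ?_
    · rw [hlam0]; norm_num
    · intro x hx
      have := hwpos x ⟨hx.1, hx.2.le⟩
      linarith
    · exact ⟨by norm_num, by norm_num⟩
  have := hpos 2 (hmem 2 ⟨by norm_num, le_rfl⟩)
  norm_num at hcomp
  linarith
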